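/- Under the hypotheses of Section 1 (fiber-preserving holomorphic contractions G_1,…,G_m with separation constant d > 0 and fiberwise Lipschitz bounds between e^{-A} and e^{-a}): for every 0 < r < 1 there exists a constant C_r > 0 such that for any two distinct finite words (ω_0,…,ω_p) ≠ (ω'_0,…,ω'_p) of length p+1 and all (λ,z), (λ',z') ∈ D_r × B, ‖G_{ω_0…ω_p}(λ,z) − G_{ω'_0…ω'_p}(λ',z')‖ ≥ C_r e^{-pA}, where D_r is the disc of radius r. One may take C_r = d/(2K_r) where K_r is a uniform Lipschitz constant in λ on D_r obtained from Cauchy estimates. -/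

import Mathlib

open Metric Set Real

namespace Stmt4Aux

variable {k m : ℕ}

noncomputable def wcomp (G : Fin m → ℂ × EuclideanSpace ℂ (Fin k) → ℂ × EuclideanSpace ℂ (Fin k))
    (ω : ℕ → Fin m) : ℕ → ℂ × EuclideanSpace ℂ (Fin k) → ℂ × EuclideanSpace ℂ (Fin k)
  | 0 => G (ω 0)
  | (p+1) => wcomp G ω p ∘ G (ω (p+1))

lemma wcomp_succ (G : Fin m → ℂ × EuclideanSpace ℂ (Fin k) → ℂ × EuclideanSpace ℂ (Fin k))
    (ω : ℕ → Fin m) (p : ℕ) : wcomp G ω (p+1) = wcomp G ω p ∘ G (ω (p+1)) := rfl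

lemma wcomp_peel (G : Fin m → ℂ × EuclideanSpace ℂ (Fin k) → ℂ × EuclideanSpace ℂ (Fin k))
    (ω : ℕ → Fin m) (p : ℕ) :
    wcomp G ω (p+1) = G (ω 0) ∘ wcomp G (fun n => ω (n+1)) p := by
  induction p with
  | zero => rfl
  | succ q ih =>
    rw [wcomp_succ, ih]
    rfl

lemma wcomp_eq (G : Fin m → ℂ × EuclideanSpace ℂ (Fin k) → ℂ × EuclideanSpace ℂ (Fin k))
    (ω : ℕ → Fin m)
    (comp : ℕ → ℂ × EuclideanSpace ℂ (Fin k) → ℂ × EuclideanSpace ℂ (Fin k))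
    (h0 : comp 0 = G (ω 0)) (hs : ∀ p, comp (p + 1) = comp p ∘ G (ω (p + 1))) :
    ∀ p, comp p = wcomp G ω p := by
  intro p
  induction p with
  | zero => exact h0
  | succ q ih => rw [hs, ih]; rfl

end Stmt4Aux

/-- uniform separation of tubes indexed by distinct words, with
varying parameters in a smaller disc D_r. -/
theorem stmt_4 {k m : ℕ}
    (a A : ℝ) (ha : 0 < a) (haA : a ≤ A)
    (c : EuclideanSpace ℂ (Fin k)) (R : ℝ) (hR : 0 < R)
    (G : Fin m → ℂ × EuclideanSpace ℂ (Fin k) → ℂ × EuclideanSpace ℂ (Fin k))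
    (hol : ∀ j, ∃ U : Set (ℂ × EuclideanSpace ℂ (Fin k)), IsOpen U ∧
      closure (ball (0:ℂ) 1) ×ˢ closure (ball c R) ⊆ U ∧ DifferentiableOn ℂ (G j) U)
    (hfiber : ∀ j (lam : ℂ) z, (G j (lam, z)).1 = lam)
    (hmaps : ∀ j, G j '' (closure (ball (0:ℂ) 1) ×ˢ closure (ball c R)) ⊆
      closure (ball (0:ℂ) 1) ×ˢ ball c R)
    (hcontr : ∀ j, ∀ lam ∈ closure (ball (0:ℂ) 1), ∀ z ∈ closure (ball c R),
      ∀ z' ∈ closure (ball c R),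
      exp (-A) * ‖z - z'‖ ≤ ‖(G j (lam, z)).2 - (G j (lam, z')).2‖ ∧
      ‖(G j (lam, z)).2 - (G j (lam, z')).2‖ ≤ exp (-a) * ‖z - z'‖)
    (d : ℝ) (hd : 0 < d)
    (hsep : ∀ j j', j ≠ j' →
      ∀ x ∈ G j '' (closure (ball (0:ℂ) 1) ×ˢ closure (ball c R)),
      ∀ y ∈ G j' '' (closure (ball (0:ℂ) 1) ×ˢ closure (ball c R)), d ≤ dist x y) :
    ∀ r : ℝ, 0 < r → r < 1 → ∃ C > (0:ℝ),
      ∀ (ω ω' : ℕ → Fin m)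
        (comp comp' : ℕ → ℂ × EuclideanSpace ℂ (Fin k) → ℂ × EuclideanSpace ℂ (Fin k)),
        comp 0 = G (ω 0) → (∀ p, comp (p + 1) = comp p ∘ G (ω (p + 1))) →
        comp' 0 = G (ω' 0) → (∀ p, comp' (p + 1) = comp' p ∘ G (ω' (p + 1))) →
        ∀ p : ℕ, (∃ i ≤ p, ω i ≠ ω' i) →
        ∀ lam ∈ ball (0:ℂ) r, ∀ lam' ∈ ball (0:ℂ) r,
        ∀ z ∈ ball c R, ∀ z' ∈ ball c R,
        C * exp (-(p : ℝ) * A) ≤ ‖comp p (lam, z) - comp' p (lam', z')‖ := by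
  intro r hr hr1
  have hcb : closure (ball (0:ℂ) 1) = closedBall (0:ℂ) 1 := closure_ball 0 one_ne_zero
  have hcbR : closure (ball c R) = closedBall c R := closure_ball c (ne_of_gt hR)
  rw [hcb, hcbR] at hol hmaps hcontr hsep
  -- basic constants
  have e0 : (0:ℝ) < exp (-a) := exp_pos _
  have e1 : exp (-a) < 1 := by
    calc exp (-a) < exp 0 := exp_lt_exp.mpr (by linarith)
      _ = 1 := exp_zero
  have eA0 : (0:ℝ) < exp (-A) := exp_pos _
  have eA1 : exp (-A) ≤ 1 := by
    calc exp (-A) ≤ exp 0 := exp_le_exp.mpr (by linarith)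
      _ = 1 := exp_zero
  -- membership helpers
  have hmapsK : ∀ j (x : ℂ × EuclideanSpace ℂ (Fin k)), x.1 ∈ closedBall (0:ℂ) 1 →
      x.2 ∈ closedBall c R → (G j x).1 ∈ closedBall (0:ℂ) 1 ∧ (G j x).2 ∈ ball c R := by
    intro j x h1 h2
    have hx : G j x ∈ closedBall (0:ℂ) 1 ×ˢ ball c R :=
      hmaps j ⟨x, Set.mem_prod.mpr ⟨h1, h2⟩, rfl⟩
    exact Set.mem_prod.mp hx
  have hGfst : ∀ j (x : ℂ × EuclideanSpace ℂ (Fin k)), (G j x).1 = x.1 := by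
    intro j x
    have := hfiber j x.1 x.2
    simpa using this
  have wfst : ∀ p (ω : ℕ → Fin m) (x : ℂ × EuclideanSpace ℂ (Fin k)),
      (Stmt4Aux.wcomp G ω p x).1 = x.1 := by
    intro p
    induction p with
    | zero => intro ω x; exact hGfst (ω 0) x
    | succ q ih =>
      intro ω x
      show (Stmt4Aux.wcomp G ω q (G (ω (q+1)) x)).1 = x.1
      rw [ih, hGfst]
  have wmem : ∀ p (ω : ℕ → Fin m) (x : ℂ × EuclideanSpace ℂ (Fin k)),
      x.1 ∈ closedBall (0:ℂ) 1 → x.2 ∈ closedBall c R →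
      (Stmt4Aux.wcomp G ω p x).1 ∈ closedBall (0:ℂ) 1 ∧
      (Stmt4Aux.wcomp G ω p x).2 ∈ ball c R := by
    intro p
    induction p with
    | zero => intro ω x h1 h2; exact hmapsK (ω 0) x h1 h2
    | succ q ih =>
      intro ω x h1 h2
      show (Stmt4Aux.wcomp G ω q (G (ω (q+1)) x)).1 ∈ _ ∧ _
      have h := hmapsK (ω (q+1)) x h1 h2
      exact ih ω _ h.1 (ball_subset_closedBall h.2)
  -- product norm helpers
  have hsndle : ∀ x y : ℂ × EuclideanSpace ℂ (Fin k), ‖x.2 - y.2‖ ≤ ‖x - y‖ := by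
    intro x y; simpa using norm_snd_le (x - y)
  have hfstle : ∀ x y : ℂ × EuclideanSpace ℂ (Fin k), ‖x.1 - y.1‖ ≤ ‖x - y‖ := by
    intro x y; simpa using norm_fst_le (x - y)
  have hnormeq : ∀ x y : ℂ × EuclideanSpace ℂ (Fin k), x.1 = y.1 → ‖x - y‖ = ‖x.2 - y.2‖ := by
    intro x y h
    rw [Prod.norm_def, Prod.fst_sub, Prod.snd_sub, h, sub_self, norm_zero]
    exact max_eq_right (norm_nonneg _)
  -- upper contraction of compositions in the fibre
  have wcontr_up : ∀ p (ω : ℕ → Fin m), ∀ lam ∈ closedBall (0:ℂ) 1, ∀ w ∈ closedBall c R,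
      ∀ w' ∈ closedBall c R,
      ‖(Stmt4Aux.wcomp G ω p (lam, w)).2 - (Stmt4Aux.wcomp G ω p (lam, w')).2‖ ≤
        exp (-a) ^ (p+1) * ‖w - w'‖ := by
    intro p
    induction p with
    | zero =>
      intro ω lam hlam w hw w' hw'
      simpa [Stmt4Aux.wcomp] using (hcontr (ω 0) lam hlam w hw w' hw').2
    | succ q ih =>
      intro ω lam hlam w hw w' hw'
      have hxw : G (ω (q+1)) (lam, w) = (lam, (G (ω (q+1)) (lam, w)).2) :=
        Prod.ext (hGfst _ _) rfl
      have hxw' : G (ω (q+1)) (lam, w') = (lam, (G (ω (q+1)) (lam, w')).2) :=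
        Prod.ext (hGfst _ _) rfl
      have keyw : Stmt4Aux.wcomp G ω (q+1) (lam, w)
          = Stmt4Aux.wcomp G ω q (lam, (G (ω (q+1)) (lam, w)).2) :=
        congrArg (Stmt4Aux.wcomp G ω q) hxw
      have keyw' : Stmt4Aux.wcomp G ω (q+1) (lam, w')
          = Stmt4Aux.wcomp G ω q (lam, (G (ω (q+1)) (lam, w')).2) :=
        congrArg (Stmt4Aux.wcomp G ω q) hxw'
      rw [keyw, keyw']
      have hu : (G (ω (q+1)) (lam, w)).2 ∈ closedBall c R :=
        ball_subset_closedBall (hmapsK (ω (q+1)) (lam, w) hlam hw).2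
      have hu' : (G (ω (q+1)) (lam, w')).2 ∈ closedBall c R :=
        ball_subset_closedBall (hmapsK (ω (q+1)) (lam, w') hlam hw').2
      have hcon := (hcontr (ω (q+1)) lam hlam w hw w' hw').2
      calc ‖(Stmt4Aux.wcomp G ω q (lam, (G (ω (q+1)) (lam, w)).2)).2
            - (Stmt4Aux.wcomp G ω q (lam, (G (ω (q+1)) (lam, w')).2)).2‖
          ≤ exp (-a) ^ (q+1) * ‖(G (ω (q+1)) (lam, w)).2 - (G (ω (q+1)) (lam, w')).2‖ :=
            ih ω lam hlam _ hu _ hu'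
        _ ≤ exp (-a) ^ (q+1) * (exp (-a) * ‖w - w'‖) :=
            mul_le_mul_of_nonneg_left hcon (pow_nonneg e0.le _)
        _ = exp (-a) ^ (q+1+1) * ‖w - w'‖ := by ring
  -- norm bound on the image set
  have hMnorm : ∀ x : ℂ × EuclideanSpace ℂ (Fin k), x.1 ∈ closedBall (0:ℂ) 1 →
      x.2 ∈ ball c R → ‖x‖ ≤ max 1 (‖c‖ + R) := by
    intro x h1 h2
    rw [Prod.norm_def]
    apply max_le
    · exact le_trans (mem_closedBall_zero_iff.mp h1) (le_max_left _ _)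
    · refine le_trans ?_ (le_max_right _ _)
      have h3 : ‖x.2 - c‖ < R := by
        have := mem_ball.mp h2
        rwa [dist_eq_norm] at this
      calc ‖x.2‖ ≤ ‖c‖ + ‖x.2 - c‖ := by simpa using norm_add_le c (x.2 - c)
        _ ≤ ‖c‖ + R := by linarith
  set M : ℝ := max 1 (‖c‖ + R) with hMdef
  have hr1' : (0:ℝ) < 1 - r := by linarith
  set L : ℝ := max ((2*M+1)/(1-r)) 1 with hLdef
  have hL1 : (1:ℝ) ≤ L := le_max_right _ _
  have hLip : ∀ j, ∀ z ∈ closedBall c R, ∀ lam ∈ ball (0:ℂ) r, ∀ lam' ∈ ball (0:ℂ) r,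
      ‖G j (lam, z) - G j (lam', z)‖ ≤ L * ‖lam - lam'‖ := by
    intro j z hz
    obtain ⟨U, hUopen, hUsub, hUdiff⟩ := hol j
    set f : ℂ → ℂ × EuclideanSpace ℂ (Fin k) := fun w => G j (w, z) with hfdef
    have hfdo : ∀ w ∈ closedBall (0:ℂ) 1, DifferentiableAt ℂ f w := by
      intro w hw
      have hmem : (w, z) ∈ U := hUsub (Set.mem_prod.mpr ⟨hw, hz⟩)
      have h2 : DifferentiableAt ℂ (G j) (w, z) :=
        hUdiff.differentiableAt (hUopen.mem_nhds hmem)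
      exact h2.comp w (differentiableAt_id.prodMk (differentiableAt_const z))
    have hfM : ∀ w ∈ closedBall (0:ℂ) 1, ‖f w‖ ≤ M := by
      intro w hw
      have h := hmapsK j (w, z) hw hz
      exact hMnorm (G j (w, z)) h.1 h.2
    have hderiv : ∀ lam0 ∈ ball (0:ℂ) r, ‖deriv f lam0‖ ≤ (2*M+1)/(1-r) := by
      intro lam0 h0
      have hball : ball lam0 (1-r) ⊆ closedBall (0:ℂ) 1 := by
        intro w hw
        rw [mem_closedBall]
        calc dist w 0 ≤ dist w lam0 + dist lam0 0 := dist_triangle _ _ _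
          _ ≤ (1-r) + r := add_le_add (le_of_lt (mem_ball.mp hw)) (le_of_lt (mem_ball.mp h0))
          _ = 1 := by ring
      have hfd' : DifferentiableOn ℂ f (ball lam0 (1-r)) :=
        fun w hw => (hfdo w (hball hw)).differentiableWithinAt
      have hmapsf : MapsTo f (ball lam0 (1-r)) (ball (f lam0) (2*M+1)) := by
        intro w hw
        rw [mem_ball, dist_eq_norm]
        have h1 : ‖f w‖ ≤ M := hfM w (hball hw)
        have h2 : ‖f lam0‖ ≤ M := hfM lam0 (hball (mem_ball_self hr1'))
        calc ‖f w - f lam0‖ ≤ ‖f w‖ + ‖f lam0‖ := norm_sub_le _ _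
          _ ≤ M + M := add_le_add h1 h2
          _ < 2*M+1 := by linarith
      exact Complex.norm_deriv_le_div_of_mapsTo_ball hfd' (hmapsf.mono_right ball_subset_closedBall) hr1'
    intro lam hlam lam' hlam'
    have hballsub : ball (0:ℂ) r ⊆ closedBall (0:ℂ) 1 := by
      intro w hw
      rw [mem_closedBall]
      exact le_of_lt (lt_trans (mem_ball.mp hw) hr1)
    have hmvt := Convex.norm_image_sub_le_of_norm_hasFDerivWithin_le
      (f := f) (f' := fun x => ContinuousLinearMap.smulRight (1 : ℂ →L[ℂ] ℂ) (deriv f x))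
      (s := ball (0:ℂ) r) (C := (2*M+1)/(1-r))
      (fun x hx => ((hfdo x (hballsub hx)).hasDerivAt.hasFDerivAt).hasFDerivWithinAt)
      (fun x hx => by
        rw [ContinuousLinearMap.norm_smulRight_apply]
        simpa using hderiv x hx)
      (convex_ball 0 r) hlam' hlam
    calc ‖G j (lam, z) - G j (lam', z)‖ = ‖f lam - f lam'‖ := rfl
      _ ≤ (2*M+1)/(1-r) * ‖lam - lam'‖ := hmvt
      _ ≤ L * ‖lam - lam'‖ :=
          mul_le_mul_of_nonneg_right (le_max_left _ _) (norm_nonneg _)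
  -- Lipschitz in lambda of compositions
  have wlip : ∀ p (ω : ℕ → Fin m), ∀ lam ∈ ball (0:ℂ) r, ∀ lam' ∈ ball (0:ℂ) r,
      ∀ z ∈ closedBall c R,
      ‖Stmt4Aux.wcomp G ω p (lam, z) - Stmt4Aux.wcomp G ω p (lam', z)‖ ≤
        (L * ∑ q ∈ Finset.range (p+1), exp (-a) ^ q) * ‖lam - lam'‖ := by
    intro p
    induction p with
    | zero =>
      intro ω lam hlam lam' hlam' z hz
      have h := hLip (ω 0) z hz lam hlam lam' hlam'
      simpa [Stmt4Aux.wcomp] using h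
    | succ q ih =>
      intro ω lam hlam lam' hlam' z hz
      have hballsub : ball (0:ℂ) r ⊆ closedBall (0:ℂ) 1 := by
        intro w hw
        rw [mem_closedBall]
        exact le_of_lt (lt_trans (mem_ball.mp hw) hr1)
      have hlam1 : lam ∈ closedBall (0:ℂ) 1 := hballsub hlam
      have hlam1' : lam' ∈ closedBall (0:ℂ) 1 := hballsub hlam'
      have hxw : G (ω (q+1)) (lam, z) = (lam, (G (ω (q+1)) (lam, z)).2) :=
        Prod.ext (hGfst _ _) rfl
      have hxw' : G (ω (q+1)) (lam', z) = (lam', (G (ω (q+1)) (lam', z)).2) :=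
        Prod.ext (hGfst _ _) rfl
      have keyw : Stmt4Aux.wcomp G ω (q+1) (lam, z)
          = Stmt4Aux.wcomp G ω q (lam, (G (ω (q+1)) (lam, z)).2) :=
        congrArg (Stmt4Aux.wcomp G ω q) hxw
      have keyw' : Stmt4Aux.wcomp G ω (q+1) (lam', z)
          = Stmt4Aux.wcomp G ω q (lam', (G (ω (q+1)) (lam', z)).2) :=
        congrArg (Stmt4Aux.wcomp G ω q) hxw'
      rw [keyw, keyw']
      set w := (G (ω (q+1)) (lam, z)).2 with hw_def
      set w' := (G (ω (q+1)) (lam', z)).2 with hw'_def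
      have hwmem : w ∈ closedBall c R :=
        ball_subset_closedBall (hmapsK (ω (q+1)) (lam, z) hlam1 hz).2
      have hw'mem : w' ∈ closedBall c R :=
        ball_subset_closedBall (hmapsK (ω (q+1)) (lam', z) hlam1' hz).2
      have hww' : ‖w - w'‖ ≤ L * ‖lam - lam'‖ :=
        le_trans (hsndle _ _) (hLip (ω (q+1)) z hz lam hlam lam' hlam')
      have tri : ‖Stmt4Aux.wcomp G ω q (lam, w) - Stmt4Aux.wcomp G ω q (lam', w')‖ ≤
          ‖Stmt4Aux.wcomp G ω q (lam, w) - Stmt4Aux.wcomp G ω q (lam, w')‖ +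
          ‖Stmt4Aux.wcomp G ω q (lam, w') - Stmt4Aux.wcomp G ω q (lam', w')‖ := by
        have := dist_triangle (Stmt4Aux.wcomp G ω q (lam, w))
          (Stmt4Aux.wcomp G ω q (lam, w')) (Stmt4Aux.wcomp G ω q (lam', w'))
        simpa [dist_eq_norm] using this
      have h1 : ‖Stmt4Aux.wcomp G ω q (lam, w) - Stmt4Aux.wcomp G ω q (lam, w')‖ ≤
          exp (-a) ^ (q+1) * (L * ‖lam - lam'‖) := by
        rw [hnormeq _ _ (by rw [wfst, wfst])]
        exact le_trans (wcontr_up q ω lam hlam1 w hwmem w' hw'mem)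
          (mul_le_mul_of_nonneg_left hww' (pow_nonneg e0.le _))
      have h2 : ‖Stmt4Aux.wcomp G ω q (lam, w') - Stmt4Aux.wcomp G ω q (lam', w')‖ ≤
          (L * ∑ i ∈ Finset.range (q+1), exp (-a) ^ i) * ‖lam - lam'‖ :=
        ih ω lam hlam lam' hlam' w' hw'mem
      calc ‖Stmt4Aux.wcomp G ω q (lam, w) - Stmt4Aux.wcomp G ω q (lam', w')‖
          ≤ exp (-a) ^ (q+1) * (L * ‖lam - lam'‖) +
            (L * ∑ i ∈ Finset.range (q+1), exp (-a) ^ i) * ‖lam - lam'‖ := by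
            linarith [tri, h1, h2]
        _ = (L * ∑ i ∈ Finset.range (q+1+1), exp (-a) ^ i) * ‖lam - lam'‖ := by
            rw [Finset.sum_range_succ (fun i => exp (-a) ^ i) (q+1)]
            ring
  -- geometric bound
  have h1e : (0:ℝ) < 1 - exp (-a) := by linarith
  set Kc : ℝ := L * (1 - exp (-a))⁻¹ with hKcdef
  have hgeo : ∀ p, L * ∑ q ∈ Finset.range (p+1), exp (-a) ^ q ≤ Kc := by
    intro p
    have hsum : ∑ q ∈ Finset.range (p+1), exp (-a) ^ q ≤ (1 - exp (-a))⁻¹ := by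
      have heq : ∑ q ∈ Finset.range (p+1), exp (-a) ^ q
          = (1 - exp (-a) ^ (p+1)) / (1 - exp (-a)) := by
        rw [geom_sum_eq (ne_of_lt e1),
          show (1:ℝ) - exp (-a) ^ (p+1) = -(exp (-a) ^ (p+1) - 1) by ring,
          show (1:ℝ) - exp (-a) = -(exp (-a) - 1) by ring, neg_div_neg_eq]
      rw [heq, inv_eq_one_div]
      apply (div_le_div_iff_of_pos_right h1e).mpr
      nlinarith [pow_nonneg e0.le (p+1)]
    exact mul_le_mul_of_nonneg_left hsum (le_trans zero_le_one hL1)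
  have hKc1 : (1:ℝ) ≤ Kc := by
    have h2 : (1:ℝ) ≤ (1 - exp (-a))⁻¹ := by
      have hmul : (1 - exp (-a)) * (1 - exp (-a))⁻¹ = 1 := mul_inv_cancel₀ (ne_of_gt h1e)
      nlinarith [inv_nonneg.mpr h1e.le, e0]
    calc (1:ℝ) = 1 * 1 := (one_mul 1).symm
      _ ≤ L * (1 - exp (-a))⁻¹ := mul_le_mul hL1 h2 zero_le_one (le_trans zero_le_one hL1)
  have hKc0 : (0:ℝ) < Kc := lt_of_lt_of_le one_pos hKc1
  -- slice separation (same lambda)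
  have slicesep : ∀ p (ω ω' : ℕ → Fin m), (∃ i ≤ p, ω i ≠ ω' i) →
      ∀ lam ∈ closedBall (0:ℂ) 1, ∀ z ∈ closedBall c R, ∀ z' ∈ closedBall c R,
      d * exp (-A) ^ p ≤ ‖Stmt4Aux.wcomp G ω p (lam, z) - Stmt4Aux.wcomp G ω' p (lam, z')‖ := by
    intro p
    induction p with
    | zero =>
      rintro ω ω' ⟨i, hi, hne⟩ lam hlam z hz z' hz'
      have hi0 : i = 0 := Nat.le_zero.mp hi
      subst hi0
      have hs := hsep (ω 0) (ω' 0) hne (G (ω 0) (lam, z))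
        ⟨(lam, z), Set.mem_prod.mpr ⟨hlam, hz⟩, rfl⟩ (G (ω' 0) (lam, z'))
        ⟨(lam, z'), Set.mem_prod.mpr ⟨hlam, hz'⟩, rfl⟩
      rw [dist_eq_norm] at hs
      simpa [Stmt4Aux.wcomp] using hs
    | succ q ih =>
      rintro ω ω' ⟨i, hi, hne⟩ lam hlam z hz z' hz'
      rw [Stmt4Aux.wcomp_peel, Stmt4Aux.wcomp_peel]
      simp only [Function.comp_apply]
      set u := Stmt4Aux.wcomp G (fun n => ω (n+1)) q (lam, z) with hu_def
      set u' := Stmt4Aux.wcomp G (fun n => ω' (n+1)) q (lam, z') with hu'_def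
      have humem := wmem q (fun n => ω (n+1)) (lam, z) hlam hz
      have hu'mem := wmem q (fun n => ω' (n+1)) (lam, z') hlam hz'
      have hufst : u.1 = lam := wfst q _ _
      have hu'fst : u'.1 = lam := wfst q _ _
      have hu2 : u.2 ∈ closedBall c R := ball_subset_closedBall humem.2
      have hu'2 : u'.2 ∈ closedBall c R := ball_subset_closedBall hu'mem.2
      have hue : u = (lam, u.2) := Prod.ext hufst rfl
      have hu'e : u' = (lam, u'.2) := Prod.ext hu'fst rfl
      by_cases h0 : ω 0 = ω' 0
      · have hi1 : 1 ≤ i := by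
          rcases Nat.eq_zero_or_pos i with h | h
          · subst h; exact absurd h0 hne
          · exact h
        have hdiff : ∃ i' ≤ q, ω (i'+1) ≠ ω' (i'+1) :=
          ⟨i - 1, by omega, by rw [Nat.sub_add_cancel hi1]; exact hne⟩
        have hih := ih (fun n => ω (n+1)) (fun n => ω' (n+1)) hdiff lam hlam z hz z' hz'
        have hl := (hcontr (ω 0) lam hlam u.2 hu2 u'.2 hu'2).1
        calc d * exp (-A) ^ (q+1) = exp (-A) * (d * exp (-A) ^ q) := by ring
          _ ≤ exp (-A) * ‖u - u'‖ := mul_le_mul_of_nonneg_left hih eA0.le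
          _ = exp (-A) * ‖u.2 - u'.2‖ := by
              rw [hnormeq u u' (by rw [hufst, hu'fst])]
          _ ≤ ‖(G (ω 0) (lam, u.2)).2 - (G (ω 0) (lam, u'.2)).2‖ := hl
          _ ≤ ‖G (ω 0) (lam, u.2) - G (ω 0) (lam, u'.2)‖ := hsndle _ _
          _ = ‖G (ω 0) u - G (ω' 0) u'‖ := by rw [← hue, ← hu'e, h0]
      · have hs := hsep (ω 0) (ω' 0) h0 (G (ω 0) u)
          ⟨u, Set.mem_prod.mpr ⟨hufst ▸ hlam, hu2⟩, rfl⟩ (G (ω' 0) u')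
          ⟨u', Set.mem_prod.mpr ⟨hu'fst ▸ hlam, hu'2⟩, rfl⟩
        rw [dist_eq_norm] at hs
        calc d * exp (-A) ^ (q+1) ≤ d * 1 :=
              mul_le_mul_of_nonneg_left (pow_le_one₀ eA0.le eA1) hd.le
          _ = d := mul_one d
          _ ≤ ‖G (ω 0) u - G (ω' 0) u'‖ := hs
  -- final assembly
  refine ⟨d / (2 * Kc), by positivity, ?_⟩
  intro ω ω' comp comp' hc0 hcs hc0' hcs' p hne lam hlam lam' hlam' z hz z' hz'
  rw [Stmt4Aux.wcomp_eq G ω comp hc0 hcs p, Stmt4Aux.wcomp_eq G ω' comp' hc0' hcs' p]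
  have hballsub : ball (0:ℂ) r ⊆ closedBall (0:ℂ) 1 := by
    intro w hw
    rw [mem_closedBall]
    exact le_of_lt (lt_trans (mem_ball.mp hw) hr1)
  have hlam1 : lam ∈ closedBall (0:ℂ) 1 := hballsub hlam
  have hz1 : z ∈ closedBall c R := ball_subset_closedBall hz
  have hz1' : z' ∈ closedBall c R := ball_subset_closedBall hz'
  have hexp : exp (-(p:ℝ) * A) = exp (-A) ^ p := by
    rw [show -(p:ℝ) * A = (p:ℝ) * (-A) by ring, Real.exp_nat_mul]
  set x := Stmt4Aux.wcomp G ω p (lam, z) with hx_def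
  set y := Stmt4Aux.wcomp G ω' p (lam', z') with hy_def
  set ymid := Stmt4Aux.wcomp G ω' p (lam, z') with hymid_def
  have hslice : d * exp (-A) ^ p ≤ ‖x - ymid‖ := slicesep p ω ω' hne lam hlam1 z hz1 z' hz1'
  have hmid : ‖ymid - y‖ ≤ Kc * ‖lam - lam'‖ :=
    le_trans (wlip p ω' lam hlam lam' hlam' z' hz1')
      (mul_le_mul_of_nonneg_right (hgeo p) (norm_nonneg _))
  by_cases hcase : d * exp (-A) ^ p ≤ 2 * Kc * ‖lam - lam'‖
  · have hx1 : x.1 = lam := wfst p ω _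
    have hy1 : y.1 = lam' := wfst p ω' _
    have hfs : ‖lam - lam'‖ ≤ ‖x - y‖ := by
      calc ‖lam - lam'‖ = ‖x.1 - y.1‖ := by rw [hx1, hy1]
        _ ≤ ‖x - y‖ := hfstle x y
    calc d / (2*Kc) * exp (-(p:ℝ) * A) = d * exp (-A) ^ p / (2*Kc) := by
          rw [hexp]; ring
      _ ≤ 2 * Kc * ‖lam - lam'‖ / (2*Kc) := by
          apply div_le_div_of_nonneg_right hcase ?_ |>.trans_eq rfl
          positivity
      _ = ‖lam - lam'‖ := by field_simp
      _ ≤ ‖x - y‖ := hfs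
  · push_neg at hcase
    have h1 : Kc * ‖lam - lam'‖ ≤ d * exp (-A) ^ p / 2 := by linarith
    have tri : ‖x - ymid‖ ≤ ‖x - y‖ + ‖ymid - y‖ := by
      have := dist_triangle x y ymid
      simp only [dist_eq_norm] at this
      rw [norm_sub_rev y ymid] at this
      exact this
    calc d / (2*Kc) * exp (-(p:ℝ) * A) ≤ d / 2 * exp (-A) ^ p := by
          rw [hexp]
          apply mul_le_mul_of_nonneg_right ?_ (pow_nonneg eA0.le p)
          apply div_le_div_of_nonneg_left hd.le (by positivity) ?_ |>.trans_eq rfl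
          linarith
      _ = d * exp (-A) ^ p - d * exp (-A) ^ p / 2 := by ring
      _ ≤ ‖x - ymid‖ - Kc * ‖lam - lam'‖ := by linarith
      _ ≤ ‖x - ymid‖ - ‖ymid - y‖ := by linarith
      _ ≤ ‖x - y‖ := by linarith
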